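/- Let P₁,…,Pₘ be independent uniform [0,1] random variables and let P₍₁₎ ≤ ⋯ ≤ P₍ₘ₎ be their order statistics. Then under the global null, the Benjamini–Hochberg procedure at level α (rejecting if ∃ k with P₍ₖ₎ ≤ αk/m) rejects with probability exactly α. -/

import Mathlib

open Finset
open scoped ENNReal NNReal

namespace BHAux

variable (m : ℕ) (a : ℕ → ℕ)

/-- Partial sums: `t` minus the number of "balls" in the first `t` bins (periodically). -/
def gI (t : ℕ) : ℤ := (t : ℤ) - ∑ u ∈ Finset.range t, (a (u % m) : ℤ)

variable {m a}

lemma gI_succ (t : ℕ) : gI m a (t + 1) = gI m a t + 1 - a (t % m) := by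
  simp only [gI, Finset.sum_range_succ]
  push_cast
  ring

lemma gI_succ_le (t : ℕ) : gI m a (t + 1) ≤ gI m a t + 1 := by
  have := gI_succ (m := m) (a := a) t
  have h0 : (0 : ℤ) ≤ a (t % m) := Int.natCast_nonneg _
  omega

lemma window_sum (hm : 0 < m) (t : ℕ) :
    ∑ u ∈ Finset.Ico t (t + m), (a (u % m) : ℤ) = ∑ j ∈ Finset.range m, (a j : ℤ) := by
  induction t with
  | zero =>
    rw [Finset.range_eq_Ico]
    simp only [Nat.zero_add]
    exact Finset.sum_congr rfl fun u hu => by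
      rw [Nat.mod_eq_of_lt (Finset.mem_Ico.1 hu).2]
  | succ t ih =>
    have h1 : t + 1 + m = (t + m) + 1 := by omega
    rw [h1, Finset.sum_Ico_succ_top (by omega)]
    rw [Finset.sum_eq_sum_Ico_succ_bot (by omega : t < t + m)] at ih
    rw [Nat.add_mod_right]
    omega

lemma gI_add_m (hm : 0 < m) (t : ℕ) :
    gI m a (t + m) = gI m a t + ((m : ℤ) - ∑ j ∈ Finset.range m, (a j : ℤ)) := by
  unfold gI
  rw [Finset.range_eq_Ico, ← Finset.sum_Ico_consecutive _ (Nat.zero_le t) (by omega : t ≤ t + m),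
    window_sum hm, ← Finset.range_eq_Ico]
  push_cast
  ring

/-- "good" shifts: the partial sums stay strictly above for a full window. -/
def good (σ : ℕ) : Prop := ∀ t, σ < t → t ≤ σ + m → gI m a σ < gI m a t

/-- good in terms of all future times. -/
def goodF (σ : ℕ) : Prop := ∀ t, σ < t → gI m a σ < gI m a t

lemma good_iff_goodF (hm : 0 < m) (hn : ∑ j ∈ Finset.range m, a j ≤ m) (σ : ℕ) :
    good (m := m) (a := a) σ ↔ goodF (m := m) (a := a) σ := by
  have hd : (0:ℤ) ≤ (m : ℤ) - ∑ j ∈ Finset.range m, (a j : ℤ) := by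
    have : ((∑ j ∈ Finset.range m, a j : ℕ) : ℤ) ≤ (m : ℤ) := by exact_mod_cast hn
    push_cast at this ⊢
    omega
  constructor
  · intro hg
    intro t
    induction t using Nat.strong_induction_on with
    | _ t ih =>
      intro hσt
      by_cases ht : t ≤ σ + m
      · exact hg t hσt ht
      · have htm : σ < t - m := by omega
        have h2 : t - m < t := by omega
        have := ih (t - m) h2 htm
        have heq := gI_add_m (a := a) hm (t - m)
        rw [(by omega : t - m + m = t)] at heq
        omega
  · intro hg t h1 _; exact hg t h1

lemma goodF_add_m (hm : 0 < m) (hn : ∑ j ∈ Finset.range m, a j ≤ m) (σ : ℕ) :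
    goodF (m := m) (a := a) (σ + m) ↔ goodF (m := m) (a := a) σ := by
  have hd : (0:ℤ) ≤ (m : ℤ) - ∑ j ∈ Finset.range m, (a j : ℤ) := by
    have : ((∑ j ∈ Finset.range m, a j : ℕ) : ℤ) ≤ (m : ℤ) := by exact_mod_cast hn
    push_cast at this ⊢
    omega
  constructor
  · intro hg t hσt
    have h1 : σ + m < t + m := by omega
    have := hg (t + m) h1
    rw [gI_add_m hm, gI_add_m hm] at this
    omega
  · intro hg t hσt
    have h1 : σ < t - m := by omega
    have h2 : t - m + m = t := by omega
    have := hg (t - m) h1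
    rw [gI_add_m hm σ, ← h2, gI_add_m hm (t - m)]
    omega

end BHAux

namespace BHAux
open scoped Classical

variable {m : ℕ} {a : ℕ → ℕ}

lemma gI_add_mul (hm : 0 < m) (q t : ℕ) :
    gI m a (t + q * m) = gI m a t + q * ((m : ℤ) - ∑ j ∈ Finset.range m, (a j : ℤ)) := by
  induction q with
  | zero => simp
  | succ q ih =>
    have h1 : t + (q + 1) * m = (t + q * m) + m := by ring
    rw [h1, gI_add_m hm, ih]
    push_cast
    ring

lemma goodF_add_mul (hm : 0 < m) (hn : ∑ j ∈ Finset.range m, a j ≤ m) (q σ : ℕ) :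
    goodF (m := m) (a := a) (σ + q * m) ↔ goodF (m := m) (a := a) σ := by
  induction q with
  | zero => simp
  | succ q ih =>
    have h1 : σ + (q + 1) * m = (σ + q * m) + m := by ring
    rw [h1, goodF_add_m hm hn, ih]

/-- number of good shifts in the window `[c, c+m)` -/
noncomputable def countGood (m : ℕ) (a : ℕ → ℕ) (c : ℕ) : ℕ :=
  ∑ σ ∈ Finset.Ico c (c + m), if goodF (m := m) (a := a) σ then 1 else 0

lemma countGood_succ (hm : 0 < m) (hn : ∑ j ∈ Finset.range m, a j ≤ m) (c : ℕ) :
    countGood m a (c + 1) = countGood m a c := by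
  unfold countGood
  rw [(by omega : c + 1 + m = (c + m) + 1), Finset.sum_Ico_succ_top (by omega)]
  rw [Finset.sum_eq_sum_Ico_succ_bot (by omega : c < c + m)]
  have : goodF (m := m) (a := a) (c + m) ↔ goodF (m := m) (a := a) c := goodF_add_m hm hn c
  by_cases h : goodF (m := m) (a := a) c
  · simp only [if_pos h, if_pos (this.2 h)]
    omega
  · have h2 : ¬ goodF (m := m) (a := a) (c + m) := fun hh => h (this.1 hh)
    simp only [if_neg h, if_neg h2]
    omega

lemma countGood_eq (hm : 0 < m) (hn : ∑ j ∈ Finset.range m, a j ≤ m) (c : ℕ) :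
    countGood m a c = countGood m a 0 := by
  induction c with
  | zero => rfl
  | succ c ih => rw [countGood_succ hm hn, ih]

end BHAux

namespace BHAux
open scoped Classical

variable {m : ℕ} {a : ℕ → ℕ}

lemma countGood_zero (hm : 0 < m) (hlt : ∑ j ∈ Finset.range m, a j < m) :
    countGood m a 0 = m - ∑ j ∈ Finset.range m, a j := by
  classical
  set n := ∑ j ∈ Finset.range m, a j with hn
  set dn : ℕ := m - n with hdn
  have hdpos : 0 < dn := by omega
  have hD : (m : ℤ) - ∑ j ∈ Finset.range m, (a j : ℤ) = (dn : ℤ) := by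
    have h0 : ((n : ℕ) : ℤ) = ∑ j ∈ Finset.range m, (a j : ℤ) := by
      rw [hn]; push_cast; ring
    omega
  have hnm : n ≤ m := le_of_lt hlt
  have hmodle : ∀ t, gI m a (t % m) ≤ gI m a t ∧
      gI m a t = gI m a (t % m) + ((t / m : ℕ) : ℤ) * (dn : ℤ) := by
    intro t
    have h1 : gI m a (t % m + (t / m) * m)
        = gI m a (t % m) + ((t / m : ℕ) : ℤ) * (dn : ℤ) := by
      rw [gI_add_mul hm, hD]
    rw [Nat.mod_add_div'] at h1
    refine ⟨?_, h1⟩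
    rw [h1]
    nlinarith [Int.natCast_nonneg (t / m), Int.natCast_nonneg dn]
  obtain ⟨tm, htm_mem, htm_min⟩ :=
    Finset.exists_min_image (Finset.range m) (gI m a) ⟨0, Finset.mem_range.2 hm⟩
  set gmin := gI m a tm with hgmin
  have hgmin_le : ∀ t, gmin ≤ gI m a t := by
    intro t
    have h2 := htm_min (t % m) (Finset.mem_range.2 (Nat.mod_lt t hm))
    exact le_trans h2 (hmodle t).1
  set L : ℤ → ℕ := fun v => sSup {t | gI m a t ≤ v} with hLdef
  have hBdd : ∀ v : ℤ, BddAbove {t | gI m a t ≤ v} := by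
    intro v
    refine ⟨m * ((v - gmin).toNat + 1), fun t ht => ?_⟩
    simp only [Set.mem_setOf_eq] at ht
    have h2 := (hmodle t).2
    have h3 := hgmin_le (t % m)
    have h4 : ((t / m : ℕ) : ℤ) ≤ ((t / m : ℕ) : ℤ) * (dn : ℤ) := by
      nlinarith [Int.natCast_nonneg (t / m),
        (by exact_mod_cast hdpos : (1:ℤ) ≤ (dn:ℤ))]
    have h5 : ((t / m : ℕ) : ℤ) ≤ v - gmin := by omega
    have h6 : t / m ≤ (v - gmin).toNat := by omega
    have h7 := Nat.mod_add_div' t m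
    have h8 := Nat.mod_lt t hm
    nlinarith
  have hNe : ∀ v : ℤ, gmin ≤ v → ({t | gI m a t ≤ v} : Set ℕ).Nonempty :=
    fun v hv => ⟨tm, by simpa using hv⟩
  have hLmem : ∀ v : ℤ, gmin ≤ v → gI m a (L v) ≤ v :=
    fun v hv => Nat.sSup_mem (hNe v hv) (hBdd v)
  have hLub : ∀ v : ℤ, ∀ t, gI m a t ≤ v → t ≤ L v :=
    fun v t ht => le_csSup (hBdd v) ht
  have hLgt : ∀ v : ℤ, ∀ t, L v < t → v < gI m a t := by
    intro v t ht
    by_contra hc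
    push_neg at hc
    have := hLub v t hc
    omega
  have hLmono : ∀ v v' : ℤ, gmin ≤ v → v ≤ v' → L v ≤ L v' := by
    intro v v' hv hvv
    exact hLub v' (L v) (le_trans (hLmem v hv) hvv)
  have hLstrict : ∀ v v' : ℤ, gmin ≤ v → v < v' → L v < L v' := by
    intro v v' hv hvv
    have h1 : gI m a (L v + 1) ≤ v + 1 :=
      le_trans (gI_succ_le _) (by have := hLmem v hv; omega)
    have h2 : L v + 1 ≤ L v' := hLub v' _ (by omega)
    omega
  have hLshift : ∀ v : ℤ, gmin ≤ v → L (v + dn) = L v + m := by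
    intro v hv
    have hge : L v + m ≤ L (v + dn) := by
      refine hLub _ _ ?_
      rw [gI_add_m hm, hD]
      have := hLmem v hv
      omega
    have hle : L (v + dn) ≤ L v + m := by
      by_contra hc
      push_neg at hc
      have ht : gI m a (L (v + dn)) ≤ v + dn := hLmem _ (by omega)
      have h9 : L (v + dn) - m + m = L (v + dn) := by omega
      have h10 : gI m a (L (v + dn) - m + m) = gI m a (L (v + dn) - m) + (dn : ℤ) := by
        rw [gI_add_m hm, hD]
      rw [h9] at h10
      have h11 : gI m a (L (v + dn) - m) ≤ v := by omega
      have h12 := hLub v _ h11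
      omega
    omega
  have hgoodL : ∀ v : ℤ, gmin ≤ v → goodF (m := m) (a := a) (L v) := by
    intro v hv t ht
    have := hLgt v t ht
    have := hLmem v hv
    omega
  have hgoodchar : ∀ σ, goodF (m := m) (a := a) σ → σ = L (gI m a σ) := by
    intro σ hσ
    have h1 : σ ≤ L (gI m a σ) := hLub _ _ le_rfl
    rcases lt_or_eq_of_le h1 with h2 | h2
    · have h3 := hσ (L (gI m a σ)) h2
      have h4 := hLmem (gI m a σ) (hgmin_le σ)
      omega
    · exact h2
  have key : countGood m a (L gmin) = dn := by
    unfold countGood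
    rw [← Finset.card_filter]
    have himg : (Finset.Ico (L gmin) (L gmin + m)).filter (fun σ => goodF (m := m) (a := a) σ)
        = (Finset.range dn).image (fun j : ℕ => L (gmin + (j : ℤ))) := by
      ext σ
      simp only [Finset.mem_filter, Finset.mem_Ico, Finset.mem_image, Finset.mem_range]
      constructor
      · rintro ⟨⟨h1, h2⟩, hg⟩
        have hσL := hgoodchar σ hg
        have hvlt : gI m a σ < gmin + dn := by
          by_contra hc
          push_neg at hc
          have h3 : L (gmin + (dn : ℤ)) ≤ L (gI m a σ) := hLmono _ _ (by omega) hc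
          rw [hLshift gmin le_rfl] at h3
          omega
        refine ⟨(gI m a σ - gmin).toNat, ?_, ?_⟩
        · have := hgmin_le σ; omega
        · have hcast : gmin + ((gI m a σ - gmin).toNat : ℤ) = gI m a σ := by
            have := hgmin_le σ; omega
          rw [hcast]
          exact hσL.symm
      · rintro ⟨j, hj, rfl⟩
        have hv : gmin ≤ gmin + (j : ℤ) := by omega
        refine ⟨⟨hLmono gmin _ le_rfl (by omega), ?_⟩, hgoodL _ hv⟩
        have h3 : L (gmin + (j:ℤ)) < L (gmin + (dn:ℤ)) := hLstrict _ _ hv (by omega)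
        rw [hLshift gmin le_rfl] at h3
        exact h3
    rw [himg, Finset.card_image_of_injOn, Finset.card_range]
    intro x hx y hy hxy
    simp only [Finset.coe_range, Set.mem_Iio] at hx hy
    have hxy : L (gmin + (x:ℤ)) = L (gmin + (y:ℤ)) := hxy
    by_contra hne
    rcases Nat.lt_or_ge x y with h | h
    · have := hLstrict (gmin + x) (gmin + y) (by omega) (by omega); omega
    · have h' : y < x := by omega
      have := hLstrict (gmin + y) (gmin + x) (by omega) (by omega); omega
  rw [← countGood_eq hm hnm (L gmin), key]

end BHAux

namespace BHAux
open scoped Classical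

variable {m : ℕ} {a : ℕ → ℕ}

lemma sum_range_shift (σ k : ℕ) :
    ∑ r ∈ Finset.range (k + 1), (a ((σ + r) % m) : ℤ)
      = ((k : ℤ) + 1) - (gI m a (σ + (k + 1)) - gI m a σ) := by
  have h1 : ∑ u ∈ Finset.Ico σ (σ + (k + 1)), (a (u % m) : ℤ)
      = ∑ r ∈ Finset.range (k + 1), (a ((σ + r) % m) : ℤ) := by
    rw [Finset.sum_Ico_eq_sum_range]
    simp
  have h2 : ∑ u ∈ Finset.range σ, (a (u % m) : ℤ)
        + ∑ u ∈ Finset.Ico σ (σ + (k + 1)), (a (u % m) : ℤ)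
      = ∑ u ∈ Finset.range (σ + (k + 1)), (a (u % m) : ℤ) := by
    rw [Finset.range_eq_Ico, Finset.range_eq_Ico]
    exact Finset.sum_Ico_consecutive (fun u => (a (u % m) : ℤ)) (Nat.zero_le σ) (by omega : σ ≤ σ + (k + 1))
  unfold gI
  push_cast
  omega

lemma bad_iff (hm : 0 < m) (σ : ℕ) :
    (∃ k, k < m ∧ k + 1 ≤ ∑ r ∈ Finset.range (k + 1), a ((σ + r) % m))
      ↔ ¬ good (m := m) (a := a) σ := by
  unfold good
  push_neg
  constructor
  · rintro ⟨k, hk, hle⟩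
    refine ⟨σ + (k + 1), by omega, by omega, ?_⟩
    have h1 := sum_range_shift (m := m) (a := a) σ k
    have h2 : ((k : ℤ) + 1) ≤ ∑ r ∈ Finset.range (k + 1), (a ((σ + r) % m) : ℤ) := by
      exact_mod_cast hle
    omega
  · rintro ⟨t, h1, h2, h3⟩
    refine ⟨t - σ - 1, by omega, ?_⟩
    have he : σ + (t - σ - 1 + 1) = t := by omega
    have h4 := sum_range_shift (m := m) (a := a) σ (t - σ - 1)
    rw [he] at h4
    have h5 : ((t - σ - 1 : ℕ) : ℤ) + 1 ≤ ∑ r ∈ Finset.range (t - σ - 1 + 1), (a ((σ + r) % m) : ℤ) := by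
      omega
    exact_mod_cast h5

theorem cycle_lemma (hm : 0 < m) (hn : ∑ j ∈ Finset.range m, a j ≤ m) :
    ∑ σ ∈ Finset.range m,
        (if ∃ k, k < m ∧ k + 1 ≤ ∑ r ∈ Finset.range (k + 1), a ((σ + r) % m) then 1 else 0)
      = ∑ j ∈ Finset.range m, a j := by
  classical
  have hpt : ∀ σ,
      (if ∃ k, k < m ∧ k + 1 ≤ ∑ r ∈ Finset.range (k + 1), a ((σ + r) % m) then (1:ℕ) else 0)
        + (if goodF (m := m) (a := a) σ then 1 else 0) = 1 := by
    intro σ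
    have h1 := (bad_iff (m := m) (a := a) hm σ)
    have h2 := good_iff_goodF (m := m) (a := a) hm hn σ
    by_cases hg : goodF (m := m) (a := a) σ
    · rw [if_pos hg, if_neg (by rw [h1, h2]; simp [hg])]
    · rw [if_neg hg, if_pos (by rw [h1, h2]; simpa using hg)]
  have hsum : ∑ σ ∈ Finset.range m,
      ((if ∃ k, k < m ∧ k + 1 ≤ ∑ r ∈ Finset.range (k + 1), a ((σ + r) % m) then (1:ℕ) else 0)
        + (if goodF (m := m) (a := a) σ then 1 else 0)) = m := by
    rw [Finset.sum_congr rfl fun σ _ => hpt σ]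
    simp
  rw [Finset.sum_add_distrib] at hsum
  have hcg : ∑ σ ∈ Finset.range m, (if goodF (m := m) (a := a) σ then (1:ℕ) else 0)
      = countGood m a 0 := by
    unfold countGood
    rw [Finset.range_eq_Ico]
    norm_num
  rcases Nat.lt_or_ge (∑ j ∈ Finset.range m, a j) m with hcase | hcase
  · have := countGood_zero (m := m) (a := a) hm hcase
    omega
  · have heq : ∑ j ∈ Finset.range m, a j = m := le_antisymm hn hcase
    have hzero : ∀ σ, ¬ goodF (m := m) (a := a) σ := by
      intro σ hg
      have h1 := hg (σ + m) (by omega)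
      have h2 := gI_add_m (m := m) (a := a) hm σ
      have h3 : ((∑ j ∈ Finset.range m, a j : ℕ) : ℤ) = ∑ j ∈ Finset.range m, (a j : ℤ) := by
        push_cast; ring
      omega
    have : ∑ σ ∈ Finset.range m, (if goodF (m := m) (a := a) σ then (1:ℕ) else 0) = 0 := by
      rw [Finset.sum_eq_zero]
      intro σ _
      rw [if_neg (hzero σ)]
    omega

end BHAux

namespace BHAux
open Finset

/-- rotation of the bins `{0,...,m-1}`, fixing everything else -/
def rot (m s : ℕ) (v : ℕ) : ℕ := if v < m then (v + s) % m else v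

lemma mod_inv1 {m s : ℕ} (hm : 0 < m) (hs : s < m) (x : ℕ) (hx : x < m) :
    (((m - s) % m + x) % m + s) % m = x := by
  rw [Nat.mod_add_mod, add_assoc, Nat.mod_add_mod]
  have h1 : m - s + (x + s) = m + x := by omega
  rw [h1, Nat.add_mod_left, Nat.mod_eq_of_lt hx]

lemma mod_inv2 {m s : ℕ} (hm : 0 < m) (hs : s < m) (x : ℕ) (hx : x < m) :
    ((m - s) % m + (x + s) % m) % m = x := by
  rw [Nat.add_mod_mod, Nat.mod_add_mod]
  have h1 : m - s + (x + s) = m + x := by omega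
  rw [h1, Nat.add_mod_left, Nat.mod_eq_of_lt hx]

lemma shift_count {m : ℕ} (hm : 0 < m) (b : Fin m → ℕ) :
    ∑ s ∈ Finset.range m,
      (if ∃ k : Fin m, (k : ℕ) + 1 ≤
          (Finset.univ.filter fun i => rot m s (b i) ≤ (k : ℕ)).card then (1:ℕ) else 0)
      = (Finset.univ.filter fun i : Fin m => b i < m).card := by
  classical
  set a : ℕ → ℕ := fun j => (Finset.univ.filter fun i => b i = j).card with ha
  -- total number of balls
  have h_n : ∑ j ∈ Finset.range m, a j = (Finset.univ.filter fun i : Fin m => b i < m).card := by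
    simp only [ha, Finset.card_filter]
    rw [Finset.sum_comm]
    refine Finset.sum_congr rfl fun i _ => ?_
    rw [Finset.sum_ite_eq (Finset.range m) (b i) (fun _ => (1:ℕ))]
    simp [Finset.mem_range]
  have hnm : ∑ j ∈ Finset.range m, a j ≤ m := by
    rw [h_n]
    exact le_trans (Finset.card_filter_le _ _) (by simp)
  -- the key pointwise card identity
  have hcard : ∀ s < m, ∀ k < m,
      (Finset.univ.filter fun i => rot m s (b i) ≤ k).card
        = ∑ r ∈ Finset.range (k + 1), a (((m - s) % m + r) % m) := by
    intro s hs k hk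
    rw [Finset.card_filter]
    have hswap : ∑ r ∈ Finset.range (k + 1), a (((m - s) % m + r) % m)
        = ∑ i : Fin m, ∑ r ∈ Finset.range (k + 1),
            (if b i = ((m - s) % m + r) % m then 1 else 0) := by
      rw [Finset.sum_comm]
      refine Finset.sum_congr rfl fun r _ => ?_
      exact Finset.card_filter _ _
    rw [hswap]
    refine Finset.sum_congr rfl fun i _ => ?_
    by_cases hP : rot m s (b i) ≤ k
    · rw [if_pos hP]
      have hbi : b i < m := by
        by_contra hc
        push_neg at hc
        unfold rot at hP
        rw [if_neg (by omega)] at hP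
        omega
      unfold rot at hP
      rw [if_pos hbi] at hP
      have huniq : ∀ r ∈ Finset.range (k + 1),
          (b i = ((m - s) % m + r) % m) ↔ r = (b i + s) % m := by
        intro r hr
        have hrm : r < m := by have := Finset.mem_range.1 hr; omega
        constructor
        · intro h
          rw [h, mod_inv1 hm hs r hrm]
        · intro h
          rw [h, mod_inv2 hm hs (b i) hbi]
      rw [Finset.sum_congr rfl fun r hr => by rw [if_congr (huniq r hr) rfl rfl]]
      rw [Finset.sum_ite_eq' (Finset.range (k + 1)) ((b i + s) % m) (fun _ => (1:ℕ))]
      rw [if_pos (Finset.mem_range.2 (by omega))]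
    · rw [if_neg hP]
      symm
      refine Finset.sum_eq_zero fun r hr => ?_
      rw [if_neg]
      intro hc
      have hrm : r < m := by have := Finset.mem_range.1 hr; omega
      have hbi : b i < m := by rw [hc]; exact Nat.mod_lt _ hm
      apply hP
      unfold rot
      rw [if_pos hbi, hc, mod_inv1 hm hs r hrm]
      have := Finset.mem_range.1 hr
      omega
  -- reindex the sum over shifts via σ = (m - s) % m
  have hreindex : ∑ s ∈ Finset.range m,
      (if ∃ k : Fin m, (k : ℕ) + 1 ≤
          (Finset.univ.filter fun i => rot m s (b i) ≤ (k : ℕ)).card then (1:ℕ) else 0)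
      = ∑ σ ∈ Finset.range m,
        (if ∃ k, k < m ∧ k + 1 ≤ ∑ r ∈ Finset.range (k + 1), a ((σ + r) % m)
          then (1:ℕ) else 0) := by
    refine Finset.sum_nbij' (fun s => (m - s) % m) (fun σ => (m - σ) % m) ?_ ?_ ?_ ?_ ?_
    · intro s hs
      exact Finset.mem_range.2 (Nat.mod_lt _ hm)
    · intro σ hσ
      exact Finset.mem_range.2 (Nat.mod_lt _ hm)
    · intro s hs
      have hs' := Finset.mem_range.1 hs
      show (m - (m - s) % m) % m = s
      rcases Nat.eq_zero_or_pos s with rfl | hpos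
      · simp [Nat.mod_self]
      · rw [Nat.mod_eq_of_lt (by omega : m - s < m)]
        have h2 : m - (m - s) = s := by omega
        rw [h2, Nat.mod_eq_of_lt hs']
    · intro σ hσ
      have hσ' := Finset.mem_range.1 hσ
      show (m - (m - σ) % m) % m = σ
      rcases Nat.eq_zero_or_pos σ with rfl | hpos
      · simp [Nat.mod_self]
      · rw [Nat.mod_eq_of_lt (by omega : m - σ < m)]
        have h2 : m - (m - σ) = σ := by omega
        rw [h2, Nat.mod_eq_of_lt hσ']
    · intro s hs
      have hs' := Finset.mem_range.1 hs
      congr 1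
      apply propext
      constructor
      · rintro ⟨k, hkle⟩
        exact ⟨(k : ℕ), k.isLt, by rw [← hcard s hs' k k.isLt]; exact hkle⟩
      · rintro ⟨k, hk, hkle⟩
        exact ⟨⟨k, hk⟩, by rw [hcard s hs' k hk]; exact hkle⟩
  rw [hreindex, cycle_lemma hm hnm, h_n]

end BHAux

namespace BHAux
open MeasureTheory Set

/-- bin index of a p-value: the number of thresholds strictly below `t`. -/
noncomputable def bin (m : ℕ) (α : ℝ) (t : ℝ) : ℕ :=
  (Finset.univ.filter fun j : Fin m => α * ((j : ℕ) + 1) / m < t).card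

variable {m : ℕ} {α : ℝ}

lemma bin_le_m (t : ℝ) : bin m α t ≤ m :=
  le_trans (Finset.card_filter_le _ _) (by simp)

lemma thr_mono (hm : 0 < m) (hα : 0 ≤ α) {j k : ℕ} (h : j ≤ k) :
    α * (j + 1) / m ≤ α * (k + 1) / m := by
  have hm' : (0:ℝ) < m := by exact_mod_cast hm
  rw [div_le_div_iff₀ hm' hm']
  have hjk : (j:ℝ) ≤ (k:ℝ) := by exact_mod_cast h
  nlinarith [mul_nonneg (mul_nonneg hα hm'.le) (sub_nonneg.2 hjk)]

lemma bin_le_iff (hm : 0 < m) (hα : 0 ≤ α) (t : ℝ) {k : ℕ} (hk : k < m) :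
    bin m α t ≤ k ↔ t ≤ α * (k + 1) / m := by
  constructor
  · intro h
    by_contra hc
    push_neg at hc
    have hsub : (Finset.univ.filter fun j : Fin m => (j : ℕ) ≤ k)
        ⊆ (Finset.univ.filter fun j : Fin m => α * ((j : ℕ) + 1) / m < t) := by
      intro j hj
      simp only [Finset.mem_filter, Finset.mem_univ, true_and] at hj ⊢
      exact lt_of_le_of_lt (thr_mono hm hα hj) hc
    have hcard : k + 1 ≤ (Finset.univ.filter fun j : Fin m => (j : ℕ) ≤ k).card := by
      have hinj : ∀ r ∈ Finset.range (k + 1), (⟨r % m, Nat.mod_lt _ hm⟩ : Fin m)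
          ∈ (Finset.univ.filter fun j : Fin m => (j : ℕ) ≤ k) := by
        intro r hr
        have hrk := Finset.mem_range.1 hr
        simp only [Finset.mem_filter, Finset.mem_univ, true_and]
        show r % m ≤ k
        rw [Nat.mod_eq_of_lt (by omega)]
        omega
      calc k + 1 = (Finset.range (k + 1)).card := by simp
        _ ≤ _ := Finset.card_le_card_of_injOn _ hinj ?_
      intro x hx y hy hxy
      simp only [Finset.mem_coe, Finset.mem_range] at hx hy
      have : x % m = y % m := congrArg Fin.val hxy
      rwa [Nat.mod_eq_of_lt (by omega), Nat.mod_eq_of_lt (by omega)] at this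
    have := le_trans hcard (Finset.card_le_card hsub)
    unfold bin at h
    omega
  · intro h
    have hsub : (Finset.univ.filter fun j : Fin m => α * ((j : ℕ) + 1) / m < t)
        ⊆ (Finset.univ.filter fun j : Fin m => (j : ℕ) < k) := by
      intro j hj
      simp only [Finset.mem_filter, Finset.mem_univ, true_and] at hj ⊢
      by_contra hc
      push_neg at hc
      exact absurd (lt_of_lt_of_le hj (le_trans h (thr_mono hm hα hc))) (lt_irrefl _)
    have hcard : (Finset.univ.filter fun j : Fin m => (j : ℕ) < k).card ≤ k := by
      have h2 : ∀ j ∈ (Finset.univ.filter fun j : Fin m => (j : ℕ) < k),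
          (j : ℕ) ∈ Finset.range k := by
        intro j hj
        simp only [Finset.mem_filter, Finset.mem_univ, true_and] at hj
        exact Finset.mem_range.2 hj
      have h3 := Finset.card_le_card_of_injOn (fun j : Fin m => (j : ℕ)) h2
        (fun x _ y _ h => Fin.val_injective h)
      simpa using h3
    exact le_trans (Finset.card_le_card hsub) hcard

lemma bin_eq_m_iff (hm : 0 < m) (hα : 0 ≤ α) (t : ℝ) :
    bin m α t = m ↔ α < t := by
  have h1 : bin m α t = m ↔ ¬ bin m α t ≤ m - 1 := by
    have := bin_le_m (m := m) (α := α) t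
    omega
  rw [h1, bin_le_iff hm hα t (by omega : m - 1 < m)]
  have hc : α * (((m - 1 : ℕ) : ℝ) + 1) / m = α := by
    rw [Nat.cast_sub (by omega : 1 ≤ m)]
    push_cast
    field_simp
    ring
  rw [hc]
  push_neg
  rfl

lemma bin_measurable (hm : 0 < m) (hα : 0 ≤ α) : Measurable (bin m α) := by
  apply measurable_to_countable'
  intro j
  rcases Nat.lt_or_ge j m with hj | hj
  · rcases Nat.eq_zero_or_pos j with rfl | hjpos
    · have : bin m α ⁻¹' {0} = Iic (α * (0 + 1) / m) := by
        ext t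
        simp only [Set.mem_preimage, Set.mem_singleton_iff, Set.mem_Iic, Nat.le_zero.symm]
        rw [bin_le_iff hm hα t hm]
        norm_num
      rw [this]; exact measurableSet_Iic
    · have : bin m α ⁻¹' {j} = Ioc (α * ((j - 1 : ℕ) + 1) / m) (α * (j + 1) / m) := by
        ext t
        simp only [Set.mem_preimage, Set.mem_singleton_iff, Set.mem_Ioc]
        have h1 : bin m α t = j ↔ bin m α t ≤ j ∧ ¬ bin m α t ≤ j - 1 := by omega
        rw [h1, bin_le_iff hm hα t hj, bin_le_iff hm hα t (by omega : j - 1 < m), not_le]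
        tauto
      rw [this]; exact measurableSet_Ioc
  · rcases Nat.eq_or_lt_of_le hj with heq | hj'
    · have : bin m α ⁻¹' {j} = Ioi α := by
        ext t
        simp only [Set.mem_preimage, Set.mem_singleton_iff, Set.mem_Ioi]
        rw [← heq]
        exact bin_eq_m_iff hm hα t
      rw [this]; exact measurableSet_Ioi
    · have : bin m α ⁻¹' {j} = ∅ := by
        ext t
        simp only [Set.mem_preimage, Set.mem_singleton_iff, Set.mem_empty_iff_false, iff_false]
        have := bin_le_m (m := m) (α := α) t
        omega
      rw [this]; exact MeasurableSet.empty

end BHAux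

namespace BHAux
open MeasureTheory Set

variable {m : ℕ} {α : ℝ}

lemma kappa_singleton_lt (hm : 0 < m) (hα : α ∈ Set.Icc (0:ℝ) 1) {j : ℕ} (hj : j < m) :
    ((volume.restrict (Set.Icc (0:ℝ) 1)).map (bin m α)) {j} = ENNReal.ofReal (α / m) := by
  obtain ⟨hα0, hα1⟩ := hα
  have hm' : (0:ℝ) < m := by exact_mod_cast hm
  have hmm : (1:ℝ) ≤ m := by exact_mod_cast hm
  rw [Measure.map_apply (bin_measurable hm hα0) (measurableSet_singleton _)]
  rcases Nat.eq_zero_or_pos j with rfl | hjpos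
  · have hpre : bin m α ⁻¹' {0} = Set.Iic (α * (0 + 1) / m) := by
      ext t
      simp only [Set.mem_preimage, Set.mem_singleton_iff, Set.mem_Iic, ← Nat.le_zero]
      rw [bin_le_iff hm hα0 t hm]
      norm_num
    rw [hpre, Measure.restrict_apply measurableSet_Iic]
    have he0 : α * (0 + 1) / m = α / m := by norm_num
    rw [he0]
    have hseteq : Set.Iic (α / m) ∩ Set.Icc 0 1 = Set.Icc 0 (α / m) := by
      ext x
      simp only [Set.mem_inter_iff, Set.mem_Iic, Set.mem_Icc]
      constructor
      · rintro ⟨h1, h2, h3⟩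
        refine ⟨h2, by linarith⟩
      · rintro ⟨h1, h2⟩
        have hd : α / m ≤ 1 := by
          rw [div_le_one hm']
          linarith
        exact ⟨by linarith, h1, by linarith⟩
    rw [hseteq, Real.volume_Icc]
    norm_num
  · have hpre : bin m α ⁻¹' {j} = Set.Ioc (α * ((j - 1 : ℕ) + 1) / m) (α * (j + 1) / m) := by
      ext t
      simp only [Set.mem_preimage, Set.mem_singleton_iff, Set.mem_Ioc]
      have h1 : bin m α t = j ↔ bin m α t ≤ j ∧ ¬ bin m α t ≤ j - 1 := by omega
      rw [h1, bin_le_iff hm hα0 t hj, bin_le_iff hm hα0 t (by omega : j - 1 < m), not_le]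
      tauto
    rw [hpre, Measure.restrict_apply measurableSet_Ioc]
    have hlow : 0 ≤ α * ((j - 1 : ℕ) + 1) / m := by positivity
    have hhigh : α * (j + 1) / m ≤ 1 := by
      rw [div_le_one hm']
      have hj1 : (j:ℝ) + 1 ≤ m := by exact_mod_cast hj
      nlinarith
    have hseteq : Set.Ioc (α * ((j - 1 : ℕ) + 1) / m) (α * (j + 1) / m) ∩ Set.Icc 0 1
        = Set.Ioc (α * ((j - 1 : ℕ) + 1) / m) (α * (j + 1) / m) := by
      refine Set.inter_eq_left.2 fun x hx => ?_
      obtain ⟨h1, h2⟩ := hx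
      exact ⟨by linarith, by linarith⟩
    rw [hseteq, Real.volume_Ioc]
    congr 1
    have hcast : ((j - 1 : ℕ) : ℝ) = (j : ℝ) - 1 := by
      rw [Nat.cast_sub (by omega : 1 ≤ j)]
      norm_num
    rw [hcast]
    field_simp
    ring

lemma kappa_singleton_ge (hm : 0 < m) (hα : α ∈ Set.Icc (0:ℝ) 1) {j : ℕ} (hj : m ≤ j) :
    ((volume.restrict (Set.Icc (0:ℝ) 1)).map (bin m α)) {j}
      = if j = m then ENNReal.ofReal (1 - α) else 0 := by
  obtain ⟨hα0, hα1⟩ := hα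
  rw [Measure.map_apply (bin_measurable hm hα0) (measurableSet_singleton _)]
  rcases Nat.eq_or_lt_of_le hj with heq | hj'
  · have hpre : bin m α ⁻¹' {j} = Set.Ioi α := by
      ext t
      simp only [Set.mem_preimage, Set.mem_singleton_iff, Set.mem_Ioi]
      rw [← heq]
      exact bin_eq_m_iff hm hα0 t
    rw [hpre, if_pos heq.symm, Measure.restrict_apply measurableSet_Ioi]
    have hseteq : Set.Ioi α ∩ Set.Icc 0 1 = Set.Ioc α 1 := by
      ext x
      simp only [Set.mem_inter_iff, Set.mem_Ioi, Set.mem_Icc, Set.mem_Ioc]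
      constructor
      · rintro ⟨h1, h2, h3⟩; exact ⟨h1, h3⟩
      · rintro ⟨h1, h2⟩; exact ⟨h1, by linarith, h2⟩
    rw [hseteq, Real.volume_Ioc]
  · have hpre : bin m α ⁻¹' {j} = (∅ : Set ℝ) := by
      ext t
      simp only [Set.mem_preimage, Set.mem_singleton_iff, Set.mem_empty_iff_false, iff_false]
      have := bin_le_m (m := m) (α := α) t
      omega
    rw [hpre, if_neg (by omega)]
    simp

lemma kappa_rot (hm : 0 < m) (hα : α ∈ Set.Icc (0:ℝ) 1) {s : ℕ} (hs : s < m) :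
    (((volume.restrict (Set.Icc (0:ℝ) 1)).map (bin m α)).map (rot m s))
      = (volume.restrict (Set.Icc (0:ℝ) 1)).map (bin m α) := by
  refine Measure.ext_iff_singleton.2 fun j => ?_
  rw [Measure.map_apply measurable_from_top (measurableSet_singleton _)]
  rcases Nat.lt_or_ge j m with hj | hj
  · have hpre : rot m s ⁻¹' {j} = {((m - s) % m + j) % m} := by
      ext v
      simp only [Set.mem_preimage, Set.mem_singleton_iff]
      constructor
      · intro hv
        unfold rot at hv
        by_cases hvm : v < m
        · rw [if_pos hvm] at hv
          rw [← hv, mod_inv2 hm hs v hvm]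
        · rw [if_neg hvm] at hv
          omega
      · intro hv
        have hw : ((m - s) % m + j) % m < m := Nat.mod_lt _ hm
        unfold rot
        rw [hv, if_pos hw, mod_inv1 hm hs j hj]
    rw [hpre, kappa_singleton_lt hm hα (Nat.mod_lt _ hm), kappa_singleton_lt hm hα hj]
  · have hpre : rot m s ⁻¹' {j} = {j} := by
      ext v
      simp only [Set.mem_preimage, Set.mem_singleton_iff]
      unfold rot
      by_cases hvm : v < m
      · rw [if_pos hvm]
        have h2 : (v + s) % m < m := Nat.mod_lt _ hm
        constructor
        · intro h; omega
        · intro h; omega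
      · rw [if_neg hvm]
    rw [hpre]

end BHAux

namespace BHAux
open MeasureTheory Set

variable {m : ℕ} {α : ℝ}

lemma kappa_lt_set (hm : 0 < m) (hα : α ∈ Set.Icc (0:ℝ) 1) :
    ((volume.restrict (Set.Icc (0:ℝ) 1)).map (bin m α)) {j : ℕ | j < m}
      = ENNReal.ofReal α := by
  have hset : {j : ℕ | j < m} = ⋃ j ∈ Finset.range m, {j} := by
    ext j; simp
  rw [hset, measure_biUnion_finset ?hd fun j _ => measurableSet_singleton j]
  · rw [Finset.sum_congr rfl fun j hj => kappa_singleton_lt hm hα (Finset.mem_range.1 hj)]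
    rw [Finset.sum_const, Finset.card_range, nsmul_eq_mul]
    rw [← ENNReal.ofReal_natCast, ← ENNReal.ofReal_mul (Nat.cast_nonneg m)]
    congr 1
    have hm' : (m:ℝ) ≠ 0 := by positivity
    field_simp
  · intro x hx y hy hxy
    simp only [Finset.mem_coe, Finset.mem_range] at hx hy
    exact Set.disjoint_singleton.2 hxy

lemma pi_event_measure (hm : 0 < m) (hα : α ∈ Set.Icc (0:ℝ) 1) :
    Measure.pi (fun _ : Fin m => (volume.restrict (Set.Icc (0:ℝ) 1)).map (bin m α))
      {b : Fin m → ℕ | ∃ k : Fin m,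
        (k : ℕ) + 1 ≤ (Finset.univ.filter fun i => b i ≤ (k : ℕ)).card}
      = ENNReal.ofReal α := by
  classical
  have hα0 := hα.1
  haveI hP : IsProbabilityMeasure (volume.restrict (Set.Icc (0:ℝ) 1)) :=
    ⟨by rw [Measure.restrict_apply_univ, Real.volume_Icc]; norm_num⟩
  set κ := (volume.restrict (Set.Icc (0:ℝ) 1)).map (bin m α) with hκ
  haveI hPκ : IsProbabilityMeasure κ :=
    Measure.isProbabilityMeasure_map (bin_measurable hm hα0).aemeasurable
  haveI : MeasurableSingletonClass (Fin m → ℕ) := by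
    refine ⟨fun b => ?_⟩
    have hsb : ({b} : Set (Fin m → ℕ)) = Set.pi Set.univ (fun i => {b i}) := by
      ext c
      simp [Set.mem_pi, funext_iff, eq_comm]
    rw [hsb]
    exact MeasurableSet.univ_pi fun i => measurableSet_singleton _
  have hall : ∀ S : Set (Fin m → ℕ), MeasurableSet S := fun S =>
    (Set.to_countable S).measurableSet
  set ν := Measure.pi (fun _ : Fin m => κ) with hν
  set A : Set (Fin m → ℕ) := {b | ∃ k : Fin m,
      (k : ℕ) + 1 ≤ (Finset.univ.filter fun i => b i ≤ (k : ℕ)).card} with hA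
  have hTpres : ∀ s ∈ Finset.range m,
      ν.map (fun b (i : Fin m) => rot m s (b i)) = ν := by
    intro s hs
    have hs' := Finset.mem_range.1 hs
    rw [hν]
    refine (Measure.pi_eq fun sets hsets => ?_).symm
    rw [Measure.map_apply (measurable_of_countable _) (MeasurableSet.univ_pi hsets)]
    have hpre : (fun b (i : Fin m) => rot m s (b i)) ⁻¹' Set.univ.pi sets
        = Set.univ.pi fun i => rot m s ⁻¹' sets i := by
      ext b
      simp [Set.mem_pi]
    rw [hpre, Measure.pi_pi]
    refine Finset.prod_congr rfl fun i _ => ?_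
    rw [← Measure.map_apply measurable_from_top (hsets i), hκ, kappa_rot hm hα hs']
  have hνT : ∀ s ∈ Finset.range m,
      ν ((fun b (i : Fin m) => rot m s (b i)) ⁻¹' A) = ν A := by
    intro s hs
    rw [← Measure.map_apply (measurable_of_countable _) (hall A), hTpres s hs]
  have hmarg : ∀ i : Fin m, ν {b : Fin m → ℕ | b i < m} = ENNReal.ofReal α := by
    intro i
    have hset : {b : Fin m → ℕ | b i < m}
        = Set.univ.pi (fun i' => if i' = i then {j : ℕ | j < m} else Set.univ) := by
      ext b
      simp only [Set.mem_setOf_eq, Set.mem_pi, Set.mem_univ, true_implies]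
      constructor
      · intro h i'
        by_cases hi : i' = i
        · subst hi
          rw [if_pos rfl]
          exact h
        · rw [if_neg hi]
          trivial
      · intro h
        have h2 := h i
        rw [if_pos rfl] at h2
        exact h2
    rw [hset, hν, Measure.pi_pi]
    rw [Finset.prod_eq_single i (fun i' _ hne => by rw [if_neg hne]; exact measure_univ)
      (fun h => absurd (Finset.mem_univ i) h)]
    rw [if_pos rfl, hκ]
    exact kappa_lt_set hm hα
  have hcount : ∀ b : Fin m → ℕ,
      ∑ s ∈ Finset.range m, (if (fun i => rot m s (b i)) ∈ A then (1:ℝ≥0∞) else 0)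
        = ((Finset.univ.filter fun i : Fin m => b i < m).card : ℝ≥0∞) := by
    intro b
    have hnat := shift_count hm b
    have hcast : ∑ s ∈ Finset.range m, (if (fun i => rot m s (b i)) ∈ A then (1:ℝ≥0∞) else 0)
        = ((∑ s ∈ Finset.range m, (if (fun i => rot m s (b i)) ∈ A then 1 else 0) : ℕ) : ℝ≥0∞) := by
      push_cast
      refine Finset.sum_congr rfl fun s _ => ?_
      split <;> simp
    rw [hcast]
    have hnat2 : (∑ s ∈ Finset.range m, (if (fun i => rot m s (b i)) ∈ A then 1 else 0) : ℕ)
        = (Finset.univ.filter fun i : Fin m => b i < m).card := by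
      refine Eq.trans (Finset.sum_congr rfl fun s _ => ?_) hnat
      exact if_congr (by simp only [hA, Set.mem_setOf_eq]) rfl rfl
    exact congrArg (Nat.cast : ℕ → ℝ≥0∞) hnat2
  have hlhs : (m : ℝ≥0∞) * ν A
      = ∑ s ∈ Finset.range m, ν ((fun b (i : Fin m) => rot m s (b i)) ⁻¹' A) := by
    rw [Finset.sum_congr rfl hνT, Finset.sum_const, Finset.card_range, nsmul_eq_mul]
  have hmid : ∑ s ∈ Finset.range m, ν ((fun b (i : Fin m) => rot m s (b i)) ⁻¹' A)
      = ∫⁻ b, ((Finset.univ.filter fun i : Fin m => b i < m).card : ℝ≥0∞) ∂ν := by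
    have h1 : ∀ s ∈ Finset.range m,
        ν ((fun b (i : Fin m) => rot m s (b i)) ⁻¹' A)
          = ∫⁻ b, Set.indicator ((fun b (i : Fin m) => rot m s (b i)) ⁻¹' A)
              (fun _ => (1:ℝ≥0∞)) b ∂ν := by
      intro s _
      rw [lintegral_indicator_const (hall _), one_mul]
    rw [Finset.sum_congr rfl h1,
      ← lintegral_finset_sum _ (fun s _ => measurable_const.indicator (hall _))]
    refine lintegral_congr fun b => ?_
    rw [← hcount b]
    refine Finset.sum_congr rfl fun s _ => ?_
    rw [Set.indicator_apply]
    exact if_congr Set.mem_preimage rfl rfl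
  have hrhs : ∫⁻ b, ((Finset.univ.filter fun i : Fin m => b i < m).card : ℝ≥0∞) ∂ν
      = (m : ℝ≥0∞) * ENNReal.ofReal α := by
    have h1 : ∀ b : Fin m → ℕ, ((Finset.univ.filter fun i : Fin m => b i < m).card : ℝ≥0∞)
        = ∑ i : Fin m, Set.indicator {b : Fin m → ℕ | b i < m} (fun _ => (1:ℝ≥0∞)) b := by
      intro b
      rw [Finset.card_filter]
      push_cast
      refine Finset.sum_congr rfl fun i _ => ?_
      by_cases hbi : b i < m <;> simp [Set.indicator_apply, hbi]
    rw [lintegral_congr h1,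
      lintegral_finset_sum _ (fun i _ => measurable_const.indicator (hall _)),
      Finset.sum_congr rfl (fun i _ => by rw [lintegral_indicator_const (hall _), one_mul, hmarg i]),
      Finset.sum_const, Finset.card_univ, Fintype.card_fin, nsmul_eq_mul]
  have hfinal := hlhs.trans (hmid.trans hrhs)
  exact (ENNReal.mul_right_inj (by exact_mod_cast hm.ne' : (m:ℝ≥0∞) ≠ 0)
    (ENNReal.natCast_ne_top m)).1 hfinal

end BHAux

open MeasureTheory Set ProbabilityTheory Finset

/-- Benjamini–Hochberg under the global null: for `m` independent uniform `[0,1]` p-values,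
the probability that some order statistic satisfies `P₍ₖ₎ ≤ αk/m` is exactly `α`.
The event `P₍ₖ₎ ≤ t` is expressed as "at least `k` of the p-values are `≤ t`". -/
theorem bh_global_null_reject_prob
    {Ω : Type*} [MeasurableSpace Ω] (μ : Measure Ω) [IsProbabilityMeasure μ]
    (m : ℕ) (hm : 0 < m) (P : Fin m → Ω → ℝ) (hmeas : ∀ i, Measurable (P i))
    (hindep : iIndepFun P μ)
    (hunif : ∀ i, Measure.map (P i) μ = volume.restrict (Icc (0:ℝ) 1))
    (α : ℝ) (hα : α ∈ Icc (0:ℝ) 1) :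
    μ {ω | ∃ k : Fin m,
        (k + 1 : ℕ) ≤ (Finset.univ.filter fun i => P i ω ≤ α * (k + 1) / m).card} =
      ENNReal.ofReal α := by
  classical
  have hα0 := hα.1
  haveI hP : IsProbabilityMeasure (volume.restrict (Icc (0:ℝ) 1)) :=
    ⟨by rw [Measure.restrict_apply_univ, Real.volume_Icc]; norm_num⟩
  haveI : MeasurableSingletonClass (Fin m → ℕ) := by
    refine ⟨fun b => ?_⟩
    have hsb : ({b} : Set (Fin m → ℕ)) = Set.pi Set.univ (fun i => {b i}) := by
      ext c
      simp [Set.mem_pi, funext_iff, eq_comm]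
    rw [hsb]
    exact MeasurableSet.univ_pi fun i => measurableSet_singleton _
  have hall : ∀ S : Set (Fin m → ℕ), MeasurableSet S := fun S =>
    (Set.to_countable S).measurableSet
  set T0 : Ω → (Fin m → ℝ) := fun ω i => P i ω with hT0def
  have hT0 : Measurable T0 := measurable_pi_lambda _ hmeas
  set G : (Fin m → ℝ) → (Fin m → ℕ) := fun x i => BHAux.bin m α (x i) with hGdef
  have hG : Measurable G :=
    measurable_pi_lambda _ fun i => (BHAux.bin_measurable hm hα0).comp (measurable_pi_apply i)
  set A : Set (Fin m → ℕ) := {b | ∃ k : Fin m,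
      (k : ℕ) + 1 ≤ (Finset.univ.filter fun i => b i ≤ (k : ℕ)).card} with hA
  have hseteq : {ω | ∃ k : Fin m,
        (k + 1 : ℕ) ≤ (Finset.univ.filter fun i => P i ω ≤ α * (k + 1) / m).card}
      = T0 ⁻¹' (G ⁻¹' A) := by
    ext ω
    simp only [Set.mem_setOf_eq, Set.mem_preimage, hA, hT0def, hGdef]
    refine exists_congr fun k => ?_
    have hfk : (Finset.univ.filter fun i : Fin m => P i ω ≤ α * ((k : ℕ) + 1) / m)
        = Finset.univ.filter (fun i : Fin m => BHAux.bin m α (P i ω) ≤ (k : ℕ)) := by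
      refine Finset.filter_congr fun i _ => ?_
      exact (BHAux.bin_le_iff hm hα0 (P i ω) k.isLt).symm
    rw [hfk]
  have hmap1 : μ.map T0 = Measure.pi (fun _ : Fin m => volume.restrict (Icc (0:ℝ) 1)) := by
    refine (Measure.pi_eq fun sets hsets => ?_).symm
    rw [Measure.map_apply hT0 (MeasurableSet.univ_pi hsets)]
    have hpre : T0 ⁻¹' Set.univ.pi sets = ⋂ i ∈ Finset.univ, P i ⁻¹' sets i := by
      ext ω
      simp [Set.mem_pi, hT0def]
    rw [hpre, hindep.measure_inter_preimage_eq_mul Finset.univ (fun i _ => hsets i)]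
    refine Finset.prod_congr rfl fun i _ => ?_
    rw [← hunif i, Measure.map_apply (hmeas i) (hsets i)]
  have hmap2 : (Measure.pi (fun _ : Fin m => volume.restrict (Icc (0:ℝ) 1))).map G
      = Measure.pi (fun _ : Fin m => (volume.restrict (Icc (0:ℝ) 1)).map (BHAux.bin m α)) := by
    refine (Measure.pi_eq fun sets hsets => ?_).symm
    rw [Measure.map_apply hG (MeasurableSet.univ_pi hsets)]
    have hpre : G ⁻¹' Set.univ.pi sets = Set.univ.pi fun i => BHAux.bin m α ⁻¹' sets i := by
      ext x
      simp [Set.mem_pi, hGdef]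
    rw [hpre, Measure.pi_pi]
    exact Finset.prod_congr rfl fun i _ =>
      (Measure.map_apply (BHAux.bin_measurable hm hα0) (hsets i)).symm
  rw [hseteq, ← Measure.map_apply hT0 (hG (hall A)), ← Measure.map_apply hG (hall A),
    hmap1, hmap2, hA]
  exact BHAux.pi_event_measure hm hα
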